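/- Given three labeled transition systems L₁, L₂, L₃ with initial states, if there exists a three-way recomposition simulation relation R between them (compatible with initial states, closed under matching non-silent steps, and closed under silent steps in either of the first two systems with the third allowed to take silent steps), then for every finite trace m, if L₁ can produce m from an initial state and L₂ can produce m from an initial state, then L₃ can produce m from an initial state. -/

import Mathlib

/-- A labeled transition system with silent (`none`) and non-silent (`some a`) steps,
and initial states. -/
structure LTS (S E : Type) where
  step : S → Option E → S → Prop
  init : S → Prop

/-- Reflexive-transitive closure of silent steps. -/
def SilentStar {S E : Type} (L : LTS S E) : S → S → Prop :=
  Relation.ReflTransGen (fun s s' => L.step s none s')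

/-- `Produces L s m`: some finite sequence of steps from `s` has exactly `m` as its
sequence of non-silent labels. -/
inductive Produces {S E : Type} (L : LTS S E) : S → List E → Prop
  | nil (s : S) : Produces L s []
  | silent {s s' : S} {m : List E} :
      L.step s none s' → Produces L s' m → Produces L s m
  | event {s s' : S} {a : E} {m : List E} :
      L.step s (some a) s' → Produces L s' m → Produces L s (a :: m)

/-- A three-way recomposition simulation relation between three LTSs. -/
def ThreeWaySim {S₁ S₂ S₃ E : Type} (L₁ : LTS S₁ E) (L₂ : LTS S₂ E) (L₃ : LTS S₃ E)
    (R : S₁ → S₂ → S₃ → Prop) : Prop :=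
  (∀ s₁ s₂, L₁.init s₁ → L₂.init s₂ → ∃ s₃, L₃.init s₃ ∧ R s₁ s₂ s₃) ∧
  (∀ s₁ s₂ s₃ a s₁' s₂', R s₁ s₂ s₃ → L₁.step s₁ (some a) s₁' → L₂.step s₂ (some a) s₂' →
    ∃ s₃'' s₃', SilentStar L₃ s₃ s₃'' ∧ L₃.step s₃'' (some a) s₃' ∧ R s₁' s₂' s₃') ∧
  (∀ s₁ s₂ s₃ s₁', R s₁ s₂ s₃ → L₁.step s₁ none s₁' →
    ∃ s₃', SilentStar L₃ s₃ s₃' ∧ R s₁' s₂ s₃') ∧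
  (∀ s₁ s₂ s₃ s₂', R s₁ s₂ s₃ → L₂.step s₂ none s₂' →
    ∃ s₃', SilentStar L₃ s₃ s₃' ∧ R s₁ s₂' s₃')

lemma silentStar_produces {S E : Type} {L : LTS S E} {s s' : S} {m : List E}
    (h : SilentStar L s s') (hp : Produces L s' m) : Produces L s m := by
  induction h with
  | refl => exact hp
  | tail _ hstep ih => exact ih (Produces.silent hstep hp)

lemma sim_peel {S₁ S₂ S₃ E : Type} {L₁ : LTS S₁ E} {L₂ : LTS S₂ E} {L₃ : LTS S₃ E}
    {R : S₁ → S₂ → S₃ → Prop} (hR : ThreeWaySim L₁ L₂ L₃ R)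
    {m : List E} {s₂ : S₂} (hp2 : Produces L₂ s₂ m) :
    ∀ {a : E} {mx : List E}, m = a :: mx → ∀ {s₁ s₁' : S₁} {s₃ : S₃},
      R s₁ s₂ s₃ → L₁.step s₁ (some a) s₁' →
      (∀ s₂' s₃', R s₁' s₂' s₃' → Produces L₂ s₂' mx → Produces L₃ s₃' mx) →
      Produces L₃ s₃ (a :: mx) := by
  obtain ⟨-, hev, -, hs2⟩ := hR
  induction hp2 with
  | nil => intro a mx h; exact absurd h (List.cons_ne_nil a mx).symm
  | silent hstep2 _ ih =>
    intro a mx heq s₁ s₁' s₃ hr hstep cont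
    obtain ⟨s₃', hstar, hr'⟩ := hs2 _ _ _ _ hr hstep2
    exact silentStar_produces hstar (ih heq hr' hstep cont)
  | event hstep2 hp2' _ =>
    intro a mx heq s₁ s₁' s₃ hr hstep cont
    injection heq with h1 h2
    subst h1; subst h2
    obtain ⟨t, t', hstar, hst, hr'⟩ := hev _ _ _ _ _ _ hr hstep hstep2
    exact silentStar_produces hstar (Produces.event hst (cont _ _ hr' hp2'))

lemma sim_produces {S₁ S₂ S₃ E : Type} {L₁ : LTS S₁ E} {L₂ : LTS S₂ E} {L₃ : LTS S₃ E}
    {R : S₁ → S₂ → S₃ → Prop} (hR : ThreeWaySim L₁ L₂ L₃ R)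
    {m : List E} {s₁ : S₁} (hp1 : Produces L₁ s₁ m) :
    ∀ {s₂ s₃}, R s₁ s₂ s₃ → Produces L₂ s₂ m → Produces L₃ s₃ m := by
  induction hp1 with
  | nil => intro s₂ s₃ _ _; exact Produces.nil s₃
  | silent hstep _ ih =>
    intro s₂ s₃ hr hp2
    obtain ⟨s₃', hstar, hr'⟩ := hR.2.2.1 _ _ _ _ hr hstep
    exact silentStar_produces hstar (ih hr' hp2)
  | event hstep _ ih =>
    intro s₂ s₃ hr hp2
    exact sim_peel hR hp2 rfl hr hstep (fun s₂' s₃' hr' hp' => ih hr' hp')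


/-- If a three-way recomposition simulation exists between `L₁`, `L₂`, `L₃`, then whenever
`L₁` and `L₂` can both produce the finite trace `m` from initial states, so can `L₃`. -/
theorem threeway_recomposition {S₁ S₂ S₃ E : Type}
    (L₁ : LTS S₁ E) (L₂ : LTS S₂ E) (L₃ : LTS S₃ E)
    (hsim : ∃ R, ThreeWaySim L₁ L₂ L₃ R) (m : List E)
    (h₁ : ∃ s₁, L₁.init s₁ ∧ Produces L₁ s₁ m)
    (h₂ : ∃ s₂, L₂.init s₂ ∧ Produces L₂ s₂ m) :
    ∃ s₃, L₃.init s₃ ∧ Produces L₃ s₃ m := by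
  obtain ⟨R, hR⟩ := hsim
  obtain ⟨s₁, hi1, hp1⟩ := h₁
  obtain ⟨s₂, hi2, hp2⟩ := h₂
  obtain ⟨s₃, hi3, hr⟩ := hR.1 _ _ hi1 hi2
  exact ⟨s₃, hi3, sim_produces hR hp1 hr hp2⟩
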